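/- With H = H₀ + P D P† as above, for i ≠ j and M_{i,j} the matrix whose sole nonzero entry is the (i,j)-th (equal to 1), the only possibly nonzero entry of the matrix E[G_H(z₁) M_{i,j} G_H(z₂)] is the (i,j)-th one, for z₁, z₂ with moduli larger than ‖H₀‖ + ‖D‖. -/

import Mathlib

open MeasureTheory
open scoped Matrix

noncomputable local instance matrixMeasurableSpace {N : ℕ} : MeasurableSpace (Matrix (Fin N) (Fin N) ℂ) :=
  MeasurableSpace.pi

noncomputable local instance matrixTopologicalSpace {N : ℕ} : TopologicalSpace (Matrix (Fin N) (Fin N) ℂ) :=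
  Pi.topologicalSpace

namespace Stmt15Aux

variable {N : ℕ}

lemma measurable_mul_left' (C : Matrix (Fin N) (Fin N) ℂ) :
    Measurable fun M : Matrix (Fin N) (Fin N) ℂ => C * M := by
  apply measurable_pi_lambda; intro k
  apply measurable_pi_lambda; intro l
  simp only [Matrix.mul_apply]
  exact Finset.measurable_sum _ fun m _ =>
    measurable_const.mul ((measurable_pi_apply l).comp (measurable_pi_apply m))

lemma measurable_mul_right' (C : Matrix (Fin N) (Fin N) ℂ) :
    Measurable fun M : Matrix (Fin N) (Fin N) ℂ => M * C := by
  apply measurable_pi_lambda; intro k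
  apply measurable_pi_lambda; intro l
  simp only [Matrix.mul_apply]
  exact Finset.measurable_sum _ fun m _ =>
    Measurable.mul (f := fun c : Matrix (Fin N) (Fin N) ℂ => c k m)
      (((measurable_pi_apply m).comp (measurable_pi_apply k))) measurable_const

instance : MeasurableMul (Matrix.unitaryGroup (Fin N) ℂ) where
  measurable_const_mul c :=
    ((measurable_mul_left' (c : Matrix (Fin N) (Fin N) ℂ)).comp measurable_subtype_coe).subtype_mk
  measurable_mul_const c :=
    ((measurable_mul_right' (c : Matrix (Fin N) (Fin N) ℂ)).comp measurable_subtype_coe).subtype_mk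

lemma diag_mul_star (u : Fin N → ℂ) (hu : ∀ k, u k * star (u k) = 1) :
    Matrix.diagonal u * (Matrix.diagonal u)ᴴ = 1 := by
  rw [Matrix.diagonal_conjTranspose, Matrix.diagonal_mul_diagonal]
  rw [show (fun i => u i * star u i) = fun _ => (1 : ℂ) from funext fun k => hu k]
  exact Matrix.diagonal_one

lemma star_mul_diag (u : Fin N → ℂ) (hu : ∀ k, u k * star (u k) = 1) :
    (Matrix.diagonal u)ᴴ * Matrix.diagonal u = 1 := by
  rw [Matrix.diagonal_conjTranspose, Matrix.diagonal_mul_diagonal]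
  rw [show (fun i => star u i * u i) = fun _ => (1 : ℂ) from
    funext fun k => by rw [mul_comm]; exact hu k]
  exact Matrix.diagonal_one

lemma conj_resolvent (u : Fin N → ℂ) (hu : ∀ k, u k * star (u k) = 1)
    (X : Matrix (Fin N) (Fin N) ℂ) (d₀ : Fin N → ℝ) (z : ℂ) :
    (Matrix.diagonal (fun l => (d₀ l : ℂ)) +
        Matrix.diagonal u * X * (Matrix.diagonal u)ᴴ - z • (1 : Matrix (Fin N) (Fin N) ℂ))⁻¹
      = Matrix.diagonal u *
          (Matrix.diagonal (fun l => (d₀ l : ℂ)) + X - z • (1 : Matrix (Fin N) (Fin N) ℂ))⁻¹ *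
          (Matrix.diagonal u)ᴴ := by
  have h1 := diag_mul_star u hu
  have h2 := star_mul_diag u hu
  have hd : Matrix.diagonal u * Matrix.diagonal (fun l => (d₀ l : ℂ)) * (Matrix.diagonal u)ᴴ
      = Matrix.diagonal (fun l => (d₀ l : ℂ)) := by
    rw [Matrix.diagonal_conjTranspose, Matrix.diagonal_mul_diagonal, Matrix.diagonal_mul_diagonal]
    ext k l
    by_cases h : k = l
    · subst h
      simp only [Matrix.diagonal_apply_eq, Pi.star_apply]
      rw [mul_comm (u k), mul_assoc, hu k, mul_one]
    · simp [Matrix.diagonal_apply_ne _ h]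
  have hz : Matrix.diagonal u * (z • (1 : Matrix (Fin N) (Fin N) ℂ)) * (Matrix.diagonal u)ᴴ
      = z • (1 : Matrix (Fin N) (Fin N) ℂ) := by
    rw [Matrix.mul_smul, Matrix.smul_mul, mul_one, h1]
  have key : Matrix.diagonal (fun l => (d₀ l : ℂ)) +
        Matrix.diagonal u * X * (Matrix.diagonal u)ᴴ - z • (1 : Matrix (Fin N) (Fin N) ℂ)
      = Matrix.diagonal u *
          (Matrix.diagonal (fun l => (d₀ l : ℂ)) + X - z • (1 : Matrix (Fin N) (Fin N) ℂ)) *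
          (Matrix.diagonal u)ᴴ := by
    rw [Matrix.mul_sub, Matrix.mul_add, Matrix.sub_mul, Matrix.add_mul, hd, hz]
  rw [key, Matrix.mul_inv_rev, Matrix.mul_inv_rev,
    Matrix.inv_eq_right_inv h2, Matrix.inv_eq_right_inv h1, Matrix.mul_assoc]

lemma mid_conj (u : Fin N → ℂ) (i j : Fin N) :
    (Matrix.diagonal u)ᴴ * Matrix.single i j (1 : ℂ) * Matrix.diagonal u
      = (star (u i) * u j) • Matrix.single i j (1 : ℂ) := by
  rw [Matrix.diagonal_conjTranspose]
  ext k l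
  rw [Matrix.mul_diagonal, Matrix.diagonal_mul, Matrix.smul_apply]
  simp only [Matrix.single, Matrix.of_apply, Pi.star_apply, smul_eq_mul]
  by_cases h1 : i = k
  · by_cases h2 : j = l
    · subst h1; subst h2; simp
    · simp [h2]
  · simp [h1]

lemma entry_eq (u : Fin N → ℂ) (i j a b : Fin N) (G₁ G₂ : Matrix (Fin N) (Fin N) ℂ) :
    (Matrix.diagonal u * G₁ * (Matrix.diagonal u)ᴴ * Matrix.single i j (1 : ℂ) *
        (Matrix.diagonal u * G₂ * (Matrix.diagonal u)ᴴ)) a b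
      = (u a * star (u i) * (u j * star (u b))) *
          (G₁ * Matrix.single i j (1 : ℂ) * G₂) a b := by
  have hre : Matrix.diagonal u * G₁ * (Matrix.diagonal u)ᴴ * Matrix.single i j (1 : ℂ) *
        (Matrix.diagonal u * G₂ * (Matrix.diagonal u)ᴴ)
      = Matrix.diagonal u *
          (G₁ * ((Matrix.diagonal u)ᴴ * Matrix.single i j (1 : ℂ) * Matrix.diagonal u) * G₂) *
          (Matrix.diagonal u)ᴴ := by
    simp only [Matrix.mul_assoc]
  rw [hre, mid_conj, Matrix.mul_smul, Matrix.smul_mul, Matrix.mul_smul, Matrix.smul_mul,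
    Matrix.smul_apply]
  rw [Matrix.diagonal_conjTranspose, Matrix.mul_diagonal, Matrix.diagonal_mul]
  simp only [Pi.star_apply, smul_eq_mul]
  ring

lemma exists_unbalanced {i j a b : Fin N} (hij : i ≠ j) (hab : (a, b) ≠ (i, j)) :
    ∃ k, ¬ ((if a = k then (1 : ℤ) else 0) + (if j = k then 1 else 0)
            = (if i = k then 1 else 0) + (if b = k then 1 else 0)) := by
  by_contra h
  push_neg at h
  apply hab
  have h1 := h i
  have h2 := h j
  rw [Prod.ext_iff]
  simp only [if_pos rfl, if_neg hij, if_neg (Ne.symm hij)] at h1 h2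
  constructor
  · by_contra ha
    simp only [if_neg ha] at h1
    split_ifs at h1 <;> omega
  · have ha : a = i := by
      by_contra ha
      simp only [if_neg ha] at h1
      split_ifs at h1 <;> omega
    subst ha
    by_contra hb
    simp only [if_neg hb, if_neg hij] at h2
    split_ifs at h2 <;> omega

lemma factor_ne_one {i j a b k₀ : Fin N}
    (hk : ¬ ((if a = k₀ then (1 : ℤ) else 0) + (if j = k₀ then 1 else 0)
            = (if i = k₀ then 1 else 0) + (if b = k₀ then 1 else 0))) :
    ((if a = k₀ then Complex.I else 1) * star (if i = k₀ then Complex.I else 1) *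
      ((if j = k₀ then Complex.I else 1) * star (if b = k₀ then Complex.I else 1))) ≠ 1 := by
  split_ifs at hk ⊢ <;>
    simp_all [Complex.ext_iff, Complex.star_def, Complex.conj_I] <;> norm_num

end Stmt15Aux

/-- With `H = H₀ + P D P†` (`P` Haar unitary, `H₀` Hermitian diagonal
with diagonal `d₀`, `D` real diagonal with diagonal `dD`), for `i ≠ j` and `M_{i,j}` the
matrix whose sole nonzero entry is the `(i,j)`-th (equal to `1`), the only possibly
nonzero entry of `E[G_H(z₁) M_{i,j} G_H(z₂)]` is the `(i,j)`-th one, for `z₁, z₂ ∈ ℂ \ ℝ`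
of modulus larger than `‖H₀‖ + ‖D‖`. -/
theorem stmt15 {N : ℕ} (μ : Measure (Matrix.unitaryGroup (Fin N) ℂ))
    [IsProbabilityMeasure μ] [μ.IsHaarMeasure]
    (d₀ dD : Fin N → ℝ) (i j : Fin N) (hij : i ≠ j) (z₁ z₂ : ℂ)
    (hz₁ : z₁.im ≠ 0) (hz₂ : z₂.im ≠ 0)
    (hlarge₁ : (⨆ n, |d₀ n|) + (⨆ n, |dD n|) < ‖z₁‖)
    (hlarge₂ : (⨆ n, |d₀ n|) + (⨆ n, |dD n|) < ‖z₂‖) :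
    ∀ a b : Fin N, (a, b) ≠ (i, j) →
      ∫ P : Matrix.unitaryGroup (Fin N) ℂ,
          ((((Matrix.diagonal fun l => (d₀ l : ℂ)) +
                (P : Matrix (Fin N) (Fin N) ℂ) * (Matrix.diagonal fun l => (dD l : ℂ)) *
                  (P : Matrix (Fin N) (Fin N) ℂ)ᴴ -
                z₁ • (1 : Matrix (Fin N) (Fin N) ℂ))⁻¹ *
              Matrix.single i j (1 : ℂ) *
            ((Matrix.diagonal fun l => (d₀ l : ℂ)) +
                (P : Matrix (Fin N) (Fin N) ℂ) * (Matrix.diagonal fun l => (dD l : ℂ)) *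
                  (P : Matrix (Fin N) (Fin N) ℂ)ᴴ -
                z₂ • (1 : Matrix (Fin N) (Fin N) ℂ))⁻¹) a b) ∂μ = 0 := by
  intro a b hab
  obtain ⟨k₀, hk₀⟩ := Stmt15Aux.exists_unbalanced hij hab
  set u : Fin N → ℂ := fun k => if k = k₀ then Complex.I else 1 with hu_def
  have hu : ∀ k, u k * star (u k) = 1 := by
    intro k
    simp only [hu_def]
    split_ifs
    · rw [Complex.star_def, Complex.conj_I]
      simp [Complex.I_mul_I]
    · simp
  have hUmem : Matrix.diagonal u ∈ Matrix.unitaryGroup (Fin N) ℂ := by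
    rw [Matrix.mem_unitaryGroup_iff]
    exact Stmt15Aux.diag_mul_star u hu
  set U : Matrix.unitaryGroup (Fin N) ℂ := ⟨Matrix.diagonal u, hUmem⟩ with hU_def
  set F : Matrix.unitaryGroup (Fin N) ℂ → ℂ := fun P =>
      ((((Matrix.diagonal fun l => (d₀ l : ℂ)) +
            (P : Matrix (Fin N) (Fin N) ℂ) * (Matrix.diagonal fun l => (dD l : ℂ)) *
              (P : Matrix (Fin N) (Fin N) ℂ)ᴴ -
            z₁ • (1 : Matrix (Fin N) (Fin N) ℂ))⁻¹ *
          Matrix.single i j (1 : ℂ) *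
        ((Matrix.diagonal fun l => (d₀ l : ℂ)) +
            (P : Matrix (Fin N) (Fin N) ℂ) * (Matrix.diagonal fun l => (dD l : ℂ)) *
              (P : Matrix (Fin N) (Fin N) ℂ)ᴴ -
            z₂ • (1 : Matrix (Fin N) (Fin N) ℂ))⁻¹) a b) with hF_def
  show ∫ P, F P ∂μ = 0
  set c : ℂ := u a * star (u i) * (u j * star (u b)) with hc_def
  have hres : ∀ (P : Matrix.unitaryGroup (Fin N) ℂ) (z : ℂ),
      ((Matrix.diagonal fun l => (d₀ l : ℂ)) +
          (Matrix.diagonal u * (P : Matrix (Fin N) (Fin N) ℂ)) *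
            (Matrix.diagonal fun l => (dD l : ℂ)) *
            (Matrix.diagonal u * (P : Matrix (Fin N) (Fin N) ℂ))ᴴ -
          z • (1 : Matrix (Fin N) (Fin N) ℂ))⁻¹
        = Matrix.diagonal u *
            ((Matrix.diagonal fun l => (d₀ l : ℂ)) +
              (P : Matrix (Fin N) (Fin N) ℂ) * (Matrix.diagonal fun l => (dD l : ℂ)) *
                (P : Matrix (Fin N) (Fin N) ℂ)ᴴ -
              z • (1 : Matrix (Fin N) (Fin N) ℂ))⁻¹ * (Matrix.diagonal u)ᴴ := by
    intro P z
    have hX : (Matrix.diagonal u * (P : Matrix (Fin N) (Fin N) ℂ)) *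
          (Matrix.diagonal fun l => (dD l : ℂ)) *
          (Matrix.diagonal u * (P : Matrix (Fin N) (Fin N) ℂ))ᴴ
        = Matrix.diagonal u *
            ((P : Matrix (Fin N) (Fin N) ℂ) * (Matrix.diagonal fun l => (dD l : ℂ)) *
              (P : Matrix (Fin N) (Fin N) ℂ)ᴴ) * (Matrix.diagonal u)ᴴ := by
      rw [Matrix.conjTranspose_mul]
      simp only [Matrix.mul_assoc]
    rw [hX]
    exact Stmt15Aux.conj_resolvent u hu _ d₀ z
  have hkey : ∀ P : Matrix.unitaryGroup (Fin N) ℂ, F (U * P) = c * F P := by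
    intro P
    have hcoe : ((U * P : Matrix.unitaryGroup (Fin N) ℂ) : Matrix (Fin N) (Fin N) ℂ)
        = Matrix.diagonal u * (P : Matrix (Fin N) (Fin N) ℂ) := rfl
    simp only [hF_def, hcoe, hres P z₁, hres P z₂, hc_def]
    exact Stmt15Aux.entry_eq u i j a b _ _
  have hinv : ∫ P, F (U * P) ∂μ = ∫ P, F P ∂μ :=
    MeasureTheory.integral_mul_left_eq_self F U
  have hmul : ∫ P, F P ∂μ = c * ∫ P, F P ∂μ := by
    conv_lhs => rw [← hinv]
    simp_rw [hkey]
    rw [MeasureTheory.integral_const_mul]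
  have hc1 : c ≠ 1 := by
    have := Stmt15Aux.factor_ne_one (i := i) (j := j) (a := a) (b := b) hk₀
    simpa [hc_def, hu_def] using this
  have h0 : (1 - c) * ∫ P, F P ∂μ = 0 := by linear_combination hmul
  rcases mul_eq_zero.mp h0 with h | h
  · exact absurd (by linear_combination -h : c = 1) hc1
  · exact h
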